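/- Consider a rooted tree T on n vertices and a depth-first search that, at each vertex, always descends into the smallest unexplored subtree first. At any point during the search, the number of already-visited vertices that still have an unvisited neighbor is O(log n); more precisely, it is at most log₂ n. -/

import Mathlib

/-- `u` lies in the subtree rooted at `v` in the rooted tree given by the
parent function `parent` (i.e. `v` is reachable from `u` by parent steps). -/
def InSubtree {V : Type*} (parent : V → V) (u v : V) : Prop :=
  Relation.ReflTransGen (fun a b => parent a = b) u v

/-- After `i` steps of the DFS with visiting order `σ` (so the visited vertices
are those `v` with `σ.symm v < i`), the set of visited vertices that still have
an unvisited neighbor in the tree. -/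
def openVertices {n : ℕ} (parent : Fin n → Fin n) (σ : Fin n ≃ Fin n) (i : ℕ) :
    Set (Fin n) :=
  {v | (σ.symm v : ℕ) < i ∧
    ∃ u : Fin n, ((parent u = v ∧ u ≠ v) ∨ (parent v = u ∧ v ≠ u)) ∧
      ¬ (σ.symm u : ℕ) < i}

section Aux

variable {V : Type*} {parent : V → V}

lemma insub_refl (a : V) : InSubtree parent a a := Relation.ReflTransGen.refl

lemma insub_step (a : V) : InSubtree parent a (parent a) :=
  Relation.ReflTransGen.single rfl

lemma insub_trans {a b c : V} (h1 : InSubtree parent a b) (h2 : InSubtree parent b c) :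
    InSubtree parent a c := Relation.ReflTransGen.trans h1 h2

/-- Two ancestors of a common vertex are comparable. -/
lemma insub_comp {u a b : V} (h1 : InSubtree parent u a) :
    InSubtree parent u b → InSubtree parent a b ∨ InSubtree parent b a := by
  induction h1 using Relation.ReflTransGen.head_induction_on with
  | refl => exact fun h2 => Or.inl h2
  | head hstep htail ih =>
    intro h2
    rcases Relation.ReflTransGen.cases_head h2 with heq | ⟨c, hc, hcb⟩
    · exact Or.inr (heq ▸ Relation.ReflTransGen.head hstep htail)
    · rw [← hc, hstep] at hcb
      exact ih hcb

/-- On a path into the subtree of `v`, there is a child of `v` through which it passes. -/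
lemma insub_child {u v : V} (h : InSubtree parent u v) :
    u ≠ v → ∃ c, parent c = v ∧ c ≠ v ∧ InSubtree parent u c := by
  induction h with
  | refl => exact fun h => absurd rfl h
  | tail hab hbc ih =>
    intro hne
    rename_i b c
    by_cases hb : b = c
    · subst hb; exact ih hne
    · exact ⟨b, hbc, hb, hab⟩

end Aux

section Tree

variable {n : ℕ} {parent : Fin n → Fin n} {r : Fin n} {σ : Fin n ≃ Fin n}

/-- σ.symm strictly decreases along nontrivial parent-chains. -/
lemma sigma_strict (hroot : parent r = r) (hstart : ∀ v, σ.symm r ≤ σ.symm v)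
    (hparent : ∀ v, v ≠ r → σ.symm (parent v) < σ.symm v)
    {a b : Fin n} (h : InSubtree parent a b) : a ≠ b → σ.symm b < σ.symm a := by
  induction h with
  | refl => exact fun h => absurd rfl h
  | tail hab hbc ih =>
    intro hne
    rename_i b c
    by_cases hb : b = a
    · subst hb
      have hbr : b ≠ r := by
        rintro rfl
        rw [hroot] at hbc
        exact hne hbc
      rw [← hbc]
      exact hparent b hbr
    · have h1 : σ.symm b < σ.symm a := ih (fun h => hb h.symm)
      by_cases hbr : b = r
      · subst hbr
        rw [hroot] at hbc
        rwa [← hbc]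
      · have := hparent b hbr
        rw [hbc] at this
        exact this.trans h1

lemma insub_antisymm (hroot : parent r = r) (hstart : ∀ v, σ.symm r ≤ σ.symm v)
    (hparent : ∀ v, v ≠ r → σ.symm (parent v) < σ.symm v)
    {a b : Fin n} (h1 : InSubtree parent a b) (h2 : InSubtree parent b a) : a = b := by
  by_contra hne
  have l1 := sigma_strict hroot hstart hparent h1 hne
  have l2 := sigma_strict hroot hstart hparent h2 (fun h => hne h.symm)
  exact absurd (l1.trans l2) (lt_irrefl _)

lemma sigma_mono (hroot : parent r = r) (hstart : ∀ v, σ.symm r ≤ σ.symm v)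
    (hparent : ∀ v, v ≠ r → σ.symm (parent v) < σ.symm v)
    {a b : Fin n} (h : InSubtree parent a b) : σ.symm b ≤ σ.symm a := by
  by_cases hne : a = b
  · subst hne; exact le_refl _
  · exact (sigma_strict hroot hstart hparent h hne).le

/-- Subtrees of distinct children are disjoint. -/
lemma children_eq (hroot : parent r = r) (hstart : ∀ v, σ.symm r ≤ σ.symm v)
    (hparent : ∀ v, v ≠ r → σ.symm (parent v) < σ.symm v)
    {v c c' u : Fin n} (hc : parent c = v) (hcne : c ≠ v) (hc' : parent c' = v)
    (hc'ne : c' ≠ v) (h1 : InSubtree parent u c) (h2 : InSubtree parent u c') : c = c' := by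
  have key : ∀ x y : Fin n, parent x = v → parent y = v → y ≠ v →
      InSubtree parent x y → x = y := by
    intro x y hx hy hyv hxy
    rcases Relation.ReflTransGen.cases_head hxy with heq | ⟨d, hd, hdb⟩
    · exact heq
    · rw [hx] at hd; subst hd
      have : InSubtree parent y v := hy ▸ insub_step y
      exact absurd (insub_antisymm hroot hstart hparent hdb this) (fun h => hyv h.symm)
  rcases insub_comp h1 h2 with h | h
  · exact key c c' hc hc' hc'ne h
  · exact (key c' c hc' hc hcne h).symm

variable {sz : Fin n → ℕ}

lemma subtree_finite (v : Fin n) : {u | InSubtree parent u v}.Finite := Set.toFinite _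

lemma sz_mono (hsz : ∀ v, sz v = {u | InSubtree parent u v}.ncard)
    {a b : Fin n} (h : InSubtree parent a b) : sz a ≤ sz b := by
  rw [hsz, hsz]
  exact Set.ncard_le_ncard (fun u hu => insub_trans hu h) (subtree_finite b)

lemma sz_pos (hsz : ∀ v, sz v = {u | InSubtree parent u v}.ncard) (a : Fin n) :
    1 ≤ sz a := by
  rw [hsz]
  have := (Set.ncard_pos (subtree_finite (parent := parent) a)).mpr ⟨a, insub_refl a⟩
  omega

lemma sz_le_n (hsz : ∀ v, sz v = {u | InSubtree parent u v}.ncard) (a : Fin n) :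
    sz a ≤ n := by
  rw [hsz]
  have h1 := Set.ncard_le_ncard (Set.subset_univ {u | InSubtree parent u a}) Set.finite_univ
  have h2 : (Set.univ : Set (Fin n)).ncard = n := by simp [Set.ncard_univ]
  omega

lemma sz_child_lt (hroot : parent r = r) (hstart : ∀ v, σ.symm r ≤ σ.symm v)
    (hparent : ∀ v, v ≠ r → σ.symm (parent v) < σ.symm v)
    (hsz : ∀ v, sz v = {u | InSubtree parent u v}.ncard)
    {c v : Fin n} (hc : parent c = v) (hcne : c ≠ v) : sz c < sz v := by
  rw [hsz, hsz]
  apply Set.ncard_lt_ncard _ (subtree_finite v)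
  constructor
  · intro u hu
    exact insub_trans hu (hc ▸ insub_step c)
  · intro hsub
    have hv : InSubtree parent v c := hsub (insub_refl v)
    exact hcne (insub_antisymm hroot hstart hparent (hc ▸ insub_step c) hv)

/-- Two distinct children give the key size bound. -/
lemma sz_two_children (hroot : parent r = r) (hstart : ∀ v, σ.symm r ≤ σ.symm v)
    (hparent : ∀ v, v ≠ r → σ.symm (parent v) < σ.symm v)
    (hsz : ∀ v, sz v = {u | InSubtree parent u v}.ncard)
    {c c' v : Fin n} (hc : parent c = v) (hcne : c ≠ v) (hc' : parent c' = v)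
    (hc'ne : c' ≠ v) (hne : c ≠ c') : sz c + sz c' < sz v := by
  have hdisj : Disjoint {u | InSubtree parent u c} {u | InSubtree parent u c'} := by
    rw [Set.disjoint_left]
    intro u hu hu'
    exact hne (children_eq hroot hstart hparent hc hcne hc' hc'ne hu hu')
  have hsub : {u | InSubtree parent u c} ∪ {u | InSubtree parent u c'} ⊆
      {u | InSubtree parent u v} := by
    rintro u (hu | hu)
    · exact insub_trans hu (hc ▸ insub_step c)
    · exact insub_trans hu (hc' ▸ insub_step c')
  have hvnot : v ∉ {u | InSubtree parent u c} ∪ {u | InSubtree parent u c'} := by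
    rintro (hv | hv)
    · exact hcne (insub_antisymm hroot hstart hparent (hc ▸ insub_step c) hv)
    · exact hc'ne (insub_antisymm hroot hstart hparent (hc' ▸ insub_step c') hv)
  have hunion : ({u | InSubtree parent u c} ∪ {u | InSubtree parent u c'}).ncard
      = sz c + sz c' := by
    rw [Set.ncard_union_eq hdisj (subtree_finite c) (subtree_finite c'), hsz, hsz]
  have hins : (insert v ({u | InSubtree parent u c} ∪ {u | InSubtree parent u c'})).ncard
      = sz c + sz c' + 1 := by
    rw [Set.ncard_insert_of_notMem hvnot ((subtree_finite c).union (subtree_finite c')),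
      hunion]
  have hle : (insert v ({u | InSubtree parent u c} ∪ {u | InSubtree parent u c'})).ncard
      ≤ sz v := by
    rw [hsz]
    apply Set.ncard_le_ncard _ (subtree_finite v)
    intro u hu
    rcases hu with rfl | hu
    · exact insub_refl u
    · exact hsub hu
  omega

end Tree

/-- counting lemma: a finite set of naturals, all ≥ 2, pairwise doubling,
has max ≥ 2 ^ card. -/
lemma doubling_bound : ∀ (k : ℕ) (T : Finset ℕ), T.card = k →
    (∀ a ∈ T, 2 ≤ a) → (∀ a ∈ T, ∀ b ∈ T, a < b → 2 * a ≤ b) →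
    ∀ a ∈ T, (∀ b ∈ T, b ≤ a) → 2 ^ k ≤ a := by
  intro k
  induction k with
  | zero =>
    intro T hT _ _ a ha _
    rw [Finset.card_eq_zero] at hT
    subst hT
    simp at ha
  | succ k ih =>
    intro T hT h2 hd a ha hmax
    by_cases hk : k = 0
    · subst hk
      simpa using h2 a ha
    · set T' := T.erase a with hT'def
      have hT' : T'.card = k := by
        rw [hT'def, Finset.card_erase_of_mem ha, hT]
        omega
      have hT'ne : T'.Nonempty := Finset.card_pos.mp (by omega)
      obtain ⟨b, hb, hbmax⟩ := T'.exists_max_image id hT'ne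
      have hbT : b ∈ T := Finset.mem_of_mem_erase hb
      have h1 : 2 ^ k ≤ b :=
        ih T' hT' (fun x hx => h2 x (Finset.mem_of_mem_erase hx))
          (fun x hx y hy hxy => hd x (Finset.mem_of_mem_erase hx) y
            (Finset.mem_of_mem_erase hy) hxy) b hb (fun c hc => hbmax c hc)
      have hba : b < a := lt_of_le_of_ne (hmax b hbT) (Finset.ne_of_mem_erase hb)
      have h3 : 2 * b ≤ a := hd b hbT a ha hba
      calc 2 ^ (k + 1) = 2 * 2 ^ k := by ring
        _ ≤ 2 * b := by omega
        _ ≤ a := h3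

theorem stmt_4 (n : ℕ) (parent : Fin n → Fin n) (r : Fin n)
    (hroot : parent r = r)
    (hreach : ∀ v, InSubtree parent v r)
    (sz : Fin n → ℕ)
    (hsz : ∀ v, sz v = {u | InSubtree parent u v}.ncard)
    (σ : Fin n ≃ Fin n)   -- `σ j` is the `j`-th vertex visited by the DFS
    (hstart : ∀ v, σ.symm r ≤ σ.symm v)
    -- every vertex is visited after its parent:
    (hparent : ∀ v, v ≠ r → σ.symm (parent v) < σ.symm v)
    -- DFS visits each subtree contiguously:
    (hcontig : ∀ v u w, InSubtree parent u v →
      σ.symm v ≤ σ.symm w → σ.symm w ≤ σ.symm u → InSubtree parent w v)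
    -- among the children of a common parent, smaller subtrees are entered first:
    (hsmall : ∀ u w, u ≠ r → w ≠ r → parent u = parent w →
      σ.symm u < σ.symm w → sz u ≤ sz w) :
    ∀ i : ℕ, (openVertices parent σ i).ncard ≤ Nat.log 2 n := by
  intro i
  set S := openVertices parent σ i with hSdef
  rcases S.eq_empty_or_nonempty with hS | hS
  · simp [hS]
  -- every open vertex has an unvisited child
  have hchild : ∀ v ∈ S, ∃ c, parent c = v ∧ c ≠ v ∧ ¬ (σ.symm c : ℕ) < i := by
    rintro v ⟨hv, u, hu | hu, huniv⟩
    · exact ⟨u, hu.1, hu.2, huniv⟩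
    · exfalso
      obtain ⟨hpv, hvu⟩ := hu
      have hvr : v ≠ r := by
        rintro rfl
        exact hvu (hpv ▸ hroot.symm)
      have := hparent v hvr
      rw [hpv] at this
      exact huniv (lt_trans (Fin.lt_def.mp this) hv)
  -- open vertices are pairwise comparable
  have hcomp : ∀ v ∈ S, ∀ w ∈ S, InSubtree parent v w ∨ InSubtree parent w v := by
    have key : ∀ v ∈ S, ∀ w ∈ S, σ.symm v ≤ σ.symm w → InSubtree parent w v := by
      intro v hv w hw hvw
      obtain ⟨c, hc, hcne, hcuniv⟩ := hchild v hv
      have hcv : InSubtree parent c v := hc ▸ insub_step c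
      apply hcontig v c w hcv hvw
      have h1 : (σ.symm w : ℕ) < i := hw.1
      have h2 : i ≤ (σ.symm c : ℕ) := not_lt.mp hcuniv
      exact Fin.le_def.mpr (by omega)
    intro v hv w hw
    rcases le_total (σ.symm v) (σ.symm w) with h | h
    · exact Or.inr (key v hv w hw h)
    · exact Or.inl (key w hw v hv h)
  -- doubling along the chain of open vertices
  have hdouble : ∀ v ∈ S, ∀ w ∈ S, InSubtree parent v w → v ≠ w → 2 * sz v ≤ sz w := by
    intro v hv w hw hvw hne
    obtain ⟨c, hc, hcne, hcuniv⟩ := hchild w hw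
    obtain ⟨c', hc', hc'ne, hvc'⟩ := insub_child hvw hne
    have hc'vis : (σ.symm c' : ℕ) < i := by
      have h1 : σ.symm c' ≤ σ.symm v := sigma_mono hroot hstart hparent hvc'
      have h2 : (σ.symm v : ℕ) < i := hv.1
      have := Fin.le_def.mp h1
      omega
    have hcc' : c ≠ c' := by
      rintro rfl
      exact hcuniv hc'vis
    have hc'r : c' ≠ r := by
      rintro rfl
      exact hc'ne (hroot ▸ hc'.symm ▸ rfl)
    have hcr : c ≠ r := by
      rintro rfl
      exact hcne (hroot ▸ hc.symm ▸ rfl)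
    have hlt : σ.symm c' < σ.symm c := by
      rw [Fin.lt_def]
      have := not_lt.mp hcuniv
      omega
    have hszcc : sz c' ≤ sz c := hsmall c' c hc'r hcr (hc'.trans hc.symm) hlt
    have hvlec' : sz v ≤ sz c' := sz_mono hsz hvc'
    have hkey : sz c + sz c' < sz w :=
      sz_two_children (σ := σ) hroot hstart hparent hsz hc hcne hc' hc'ne hcc'
    omega
  -- lower bound 2 on sizes of open vertices
  have h2lb : ∀ v ∈ S, 2 ≤ sz v := by
    intro v hv
    obtain ⟨c, hc, hcne, _⟩ := hchild v hv
    have h1 := sz_child_lt (σ := σ) hroot hstart hparent hsz hc hcne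
    have h2 := sz_pos hsz c
    omega
  -- sz is injective on S
  have hfin : S.Finite := Set.toFinite S
  have hinj : Set.InjOn sz S := by
    intro v hv w hw heq
    by_contra hne
    rcases hcomp v hv w hw with h | h
    · have := hdouble v hv w hw h hne
      have := h2lb v hv
      omega
    · have := hdouble w hw v hv h (fun h' => hne h'.symm)
      have := h2lb v hv
      omega
  classical
  set F := hfin.toFinset with hFdef
  set T := F.image sz with hTdef
  have hFS : ∀ v, v ∈ F ↔ v ∈ S := fun v => hfin.mem_toFinset
  have hcard : T.card = S.ncard := by
    rw [hTdef, Finset.card_image_of_injOn (fun v hv w hw => hinj ((hFS v).mp hv) ((hFS w).mp hw)),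
      hFdef]
    exact (Set.ncard_eq_toFinset_card S hfin).symm
  have hT2 : ∀ a ∈ T, 2 ≤ a := by
    intro a ha
    obtain ⟨v, hv, rfl⟩ := Finset.mem_image.mp ha
    exact h2lb v ((hFS v).mp hv)
  have hTd : ∀ a ∈ T, ∀ b ∈ T, a < b → 2 * a ≤ b := by
    intro a ha b hb hab
    obtain ⟨v, hv, rfl⟩ := Finset.mem_image.mp ha
    obtain ⟨w, hw, rfl⟩ := Finset.mem_image.mp hb
    have hvS := (hFS v).mp hv
    have hwS := (hFS w).mp hw
    rcases hcomp v hvS w hwS with h | h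
    · have hne : v ≠ w := by rintro rfl; omega
      exact hdouble v hvS w hwS h hne
    · have := sz_mono hsz h
      omega
  have hTne : T.Nonempty := by
    obtain ⟨v, hv⟩ := hS
    exact ⟨sz v, Finset.mem_image.mpr ⟨v, (hFS v).mpr hv, rfl⟩⟩
  obtain ⟨a, ha, hamax⟩ := T.exists_max_image id hTne
  have hbound : 2 ^ T.card ≤ a :=
    doubling_bound T.card T rfl hT2 hTd a ha (fun b hb => hamax b hb)
  have han : a ≤ n := by
    obtain ⟨v, hv, rfl⟩ := Finset.mem_image.mp ha
    exact sz_le_n hsz v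
  have hn0 : n ≠ 0 := by
    have := hT2 a ha
    omega
  have := (Nat.le_log_iff_pow_le one_lt_two hn0).mpr (hbound.trans han)
  omega
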